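/- Let μ be a measure on a measurable space Z and let ψ : Z → ℝ^m be measurable with each product ψ_i ψ_j μ-integrable. Define the real symmetric m×m matrix B by B_{ij} = ∫ ψ_i ψ_j dμ, and let B† be the Moore–Penrose pseudoinverse of B. Then (B B†) ψ(z) = ψ(z) for μ-almost every z ∈ Z; equivalently, the function z ↦ (B B† − I) ψ(z) vanishes μ-almost everywhere. -/
import Mathlib


open Matrix MeasureTheory

/-- `P` is a Moore–Penrose pseudoinverse of `M`: the four Penrose conditions. -/
def IsMoorePenrose {α β : Type*} [Fintype α] [Fintype β]
    (M : Matrix α β ℝ) (P : Matrix β α ℝ) : Prop :=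
  M * P * M = M ∧ P * M * P = P ∧ (M * P)ᵀ = M * P ∧ (P * M)ᵀ = P * M

private lemma key_lemma {Z : Type*} [MeasurableSpace Z] (μ : MeasureTheory.Measure Z) {m : ℕ}
    (ψ : Z → Fin m → ℝ)
    (hint : ∀ i j, Integrable (fun z => ψ z i * ψ z j) μ)
    (B : Matrix (Fin m) (Fin m) ℝ)
    (hB : ∀ i j, B i j = ∫ z, ψ z i * ψ z j ∂μ)
    (v : Fin m → ℝ) (hv : B *ᵥ v = 0) :
    ∀ᵐ z ∂μ, (∑ j, v j * ψ z j) = 0 := by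
  have hterm : ∀ i j, Integrable (fun z => (v i * ψ z i) * (v j * ψ z j)) μ := by
    intro i j
    have : (fun z => (v i * ψ z i) * (v j * ψ z j))
        = fun z => (v i * v j) * (ψ z i * ψ z j) := by
      funext z; ring
    rw [this]
    exact (hint i j).const_mul _
  have hexp : ∀ z, (∑ j, v j * ψ z j) ^ 2
      = ∑ i, ∑ j, (v i * ψ z i) * (v j * ψ z j) := by
    intro z
    rw [sq, Finset.sum_mul_sum]
  have hintsq : Integrable (fun z => (∑ j, v j * ψ z j) ^ 2) μ := by
    have : Integrable (fun z => ∑ i, ∑ j, (v i * ψ z i) * (v j * ψ z j)) μ := by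
      apply integrable_finset_sum
      intro i _
      exact integrable_finset_sum _ (fun j _ => hterm i j)
    simpa [hexp] using this
  have hI : ∫ z, (∑ j, v j * ψ z j) ^ 2 ∂μ = 0 := by
    have h1 : ∫ z, (∑ j, v j * ψ z j) ^ 2 ∂μ
        = ∑ i, ∑ j, ∫ z, (v i * ψ z i) * (v j * ψ z j) ∂μ := by
      simp_rw [hexp]
      rw [integral_finset_sum _ (fun i _ => integrable_finset_sum _ (fun j _ => hterm i j))]
      exact Finset.sum_congr rfl fun i _ => integral_finset_sum _ (fun j _ => hterm i j)
    rw [h1]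
    have h2 : ∀ i j, ∫ z, (v i * ψ z i) * (v j * ψ z j) ∂μ = v i * (B i j * v j) := by
      intro i j
      have : (fun z => (v i * ψ z i) * (v j * ψ z j))
          = fun z => (v i * v j) * (ψ z i * ψ z j) := by
        funext z; ring
      rw [this, integral_const_mul, ← hB i j]; ring
    simp_rw [h2]
    have h3 : ∀ i, ∑ j, v i * (B i j * v j) = v i * (B *ᵥ v) i := by
      intro i
      simp [mulVec, dotProduct, Finset.mul_sum]
    simp_rw [h3, hv]
    simp
  have hz : (fun z => (∑ j, v j * ψ z j) ^ 2) =ᵐ[μ] 0 := by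
    have := (integral_eq_zero_iff_of_nonneg (fun z => sq_nonneg _) hintsq).mp hI
    exact this
  filter_upwards [hz] with z hz2
  exact pow_eq_zero_iff two_ne_zero |>.mp hz2

/-- If `B` is the Gram matrix of `ψ` with respect to `μ` and `B†` its
Moore–Penrose pseudoinverse, then `(B B†) ψ(z) = ψ(z)` for `μ`-almost every `z`, i.e.
`(B B† − I) ψ` vanishes `μ`-almost everywhere. -/
theorem stmt_4 {Z : Type*} [MeasurableSpace Z] (μ : Measure Z) {m : ℕ}
    (ψ : Z → Fin m → ℝ)
    (hmeas : ∀ i, Measurable fun z => ψ z i)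
    (hint : ∀ i j, Integrable (fun z => ψ z i * ψ z j) μ)
    (B Bdag : Matrix (Fin m) (Fin m) ℝ)
    (hB : ∀ i j, B i j = ∫ z, ψ z i * ψ z j ∂μ)
    (hBdag : IsMoorePenrose B Bdag) :
    (∀ᵐ z ∂μ, (B * Bdag) *ᵥ ψ z = ψ z) ∧
      (∀ᵐ z ∂μ, (B * Bdag - 1) *ᵥ ψ z = 0) := by
  obtain ⟨h1, h2, h3, h4⟩ := hBdag
  set E : Matrix (Fin m) (Fin m) ℝ := B * Bdag - 1 with hE
  have hBsymm : Bᵀ = B := by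
    funext i j
    simp only [Matrix.transpose_apply, hB]
    congr 1; funext z; ring
  have hEB : E * B = 0 := by
    rw [hE, Matrix.sub_mul, Matrix.one_mul, h1, sub_self]
  have hBE : B * E = 0 := by
    have : (E * B)ᵀ = 0 := by rw [hEB]; simp
    rw [Matrix.transpose_mul] at this
    rwa [hBsymm, Matrix.transpose_sub, h3, Matrix.transpose_one, ← hE] at this
  have hEsymm : Eᵀ = E := by
    rw [hE, Matrix.transpose_sub, h3, Matrix.transpose_one]
  have hrow : ∀ i, B *ᵥ (fun j => E i j) = 0 := by
    intro i
    funext j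
    have : (B * E) j i = 0 := by rw [hBE]; rfl
    calc (B *ᵥ fun j => E i j) j = ∑ k, B j k * E i k := by
          simp [mulVec, dotProduct]
      _ = ∑ k, B j k * Eᵀ k i := by simp [hEsymm]
      _ = (B * Eᵀ) j i := rfl
      _ = 0 := by rw [hEsymm, hBE]; rfl
  have hae : ∀ᵐ z ∂μ, ∀ i, (∑ j, E i j * ψ z j) = 0 := by
    rw [MeasureTheory.ae_all_iff]
    intro i
    exact key_lemma μ ψ hint B hB _ (hrow i)
  have main : ∀ᵐ z ∂μ, E *ᵥ ψ z = 0 := by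
    filter_upwards [hae] with z hz
    funext i
    simpa [mulVec, dotProduct] using hz i
  constructor
  · filter_upwards [main] with z hz
    have := congrFun hz
    funext i
    have hi := this i
    rw [hE] at hi
    have : ((B * Bdag) *ᵥ ψ z) i - ψ z i = 0 := by
      simpa [Matrix.sub_mulVec, Matrix.one_mulVec] using hi
    linarith
  · exact main
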